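/- Let G be a connected rayless self-contained graph. Then the foundation of G is nonempty; that is, there exists a vertex of G that belongs to no removable subgraph of G. -/

import Mathlib

open SimpleGraph Function Set

/-- `s` is the vertex set of a removable subgraph of `G`: it is nonempty, proper,
and deleting it yields a graph isomorphic to `G`. -/
def IsRemovable {V : Type*} (G : SimpleGraph V) (s : Set V) : Prop :=
  s.Nonempty ∧ s ≠ Set.univ ∧ Nonempty (G ≃g (G.induce sᶜ))

/-- `G` is self-contained: isomorphic to a proper induced subgraph of itself. -/
def SelfContained {V : Type*} (G : SimpleGraph V) : Prop :=
  ∃ t : Set V, t ≠ Set.univ ∧ Nonempty (G ≃g G.induce t)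

/-- The vertex set of the foundation of `G`: vertices in no removable subgraph. -/
def FndSet {V : Type*} (G : SimpleGraph V) : Set V :=
  {v | ∀ s : Set V, IsRemovable G s → v ∉ s}

/-- The set of twisted vertices for a removable vertex set `h`. -/
def TorSet {V : Type*} (G : SimpleGraph V) (h : Set V) : Set V :=
  {v | (∃ s, IsRemovable G s ∧ v ∈ s) ∧
    ∃ hv : v ∈ hᶜ, (⟨v, hv⟩ : ↥hᶜ) ∈ FndSet (G.induce hᶜ)}

/-! ### Auxiliary lemmas -/

/-- Every vertex of a walk (as seen through `getVert`) lies in its support. -/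
lemma aux_getVert_mem_support {V : Type*} {G : SimpleGraph V} {u v : V}
    (p : G.Walk u v) (i : ℕ) : p.getVert i ∈ p.support := by
  induction p generalizing i with
  | nil =>
    cases i <;> simp [SimpleGraph.Walk.getVert]
  | cons h q ih =>
    cases i with
    | zero => simp [SimpleGraph.Walk.getVert]
    | succ n =>
      rw [SimpleGraph.Walk.getVert_cons_succ, SimpleGraph.Walk.support_cons]
      exact List.mem_cons_of_mem _ (ih n)

/-- Given a removable set `s` and an isomorphism `φ : G ≃g G.induce sᶜ`,
and another removable set `t`, the set `s ∪ φ '' t` is removable. -/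
lemma aux_removable_union {V : Type*} {G : SimpleGraph V} {s t : Set V}
    (hsne : s.Nonempty) (htu : t ≠ Set.univ) (htiso : Nonempty (G ≃g G.induce tᶜ))
    (φ : G ≃g G.induce sᶜ) :
    IsRemovable G (s ∪ (fun x => ((φ x : V))) '' t) := by
  classical
  obtain ⟨ψ⟩ := htiso
  set m : V → V := fun x => ((φ x : V)) with hm
  have hminj : Function.Injective m := by
    intro a b hab
    exact φ.toEquiv.injective (Subtype.val_injective hab)
  have hms : ∀ x, m x ∉ s := fun x => (φ x).2
  set s' : Set V := s ∪ m '' t with hs'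
  have hmem : ∀ x : V, x ∉ t → m x ∈ s'ᶜ := by
    intro x hx hmemx
    rcases hmemx with h | ⟨y, hy, hyx⟩
    · exact hms x h
    · exact hx (hminj hyx ▸ hy)
  have hs'c : ∀ y : ↥s'ᶜ, (y : V) ∈ sᶜ := fun y h => y.2 (Or.inl h)
  have hback : ∀ y : ↥s'ᶜ, (φ.symm ⟨(y : V), hs'c y⟩ : V) ∈ tᶜ := by
    intro y hin
    apply y.2
    right
    refine ⟨(φ.symm ⟨(y : V), hs'c y⟩ : V), hin, ?_⟩
    show ((φ (φ.symm ⟨(y : V), hs'c y⟩) : V)) = (y : V)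
    rw [RelIso.apply_symm_apply]
  have key : ∀ (z : ↥s'ᶜ) (x : V), (z : V) = m x → (φ.symm ⟨(z : V), hs'c z⟩ : V) = x := by
    intro z x hzx
    have h : (⟨(z : V), hs'c z⟩ : ↥sᶜ) = φ x := Subtype.ext hzx
    rw [h, RelIso.symm_apply_apply]
  let e : ↥tᶜ ≃ ↥s'ᶜ :=
    { toFun := fun x => ⟨m x, hmem x x.2⟩
      invFun := fun y => ⟨(φ.symm ⟨(y : V), hs'c y⟩ : V), hback y⟩
      left_inv := fun x => Subtype.ext (key ⟨m x, hmem x x.2⟩ x rfl)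
      right_inv := fun y => by
        apply Subtype.ext
        show ((φ (φ.symm ⟨(y : V), hs'c y⟩) : V)) = (y : V)
        rw [RelIso.apply_symm_apply] }
  have hadj : ∀ x y : ↥tᶜ, (G.induce s'ᶜ).Adj (e x) (e y) ↔ (G.induce tᶜ).Adj x y := by
    intro x y
    show G.Adj (m x) (m y) ↔ G.Adj (x : V) (y : V)
    exact φ.map_adj_iff
  obtain ⟨x0, hx0⟩ := Set.nonempty_compl.mpr htu
  refine ⟨hsne.mono Set.subset_union_left, ?_, ?_⟩
  · exact Set.nonempty_compl.mp ⟨m x0, hmem x0 hx0⟩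
  · exact ⟨ψ.trans ⟨e, hadj _ _⟩⟩

/-- If every vertex lies in a removable set, removable sets can be extended to
cover any additional vertex. -/
lemma aux_ext_one {V : Type*} {G : SimpleGraph V}
    (hcov : ∀ v, ∃ s, IsRemovable G s ∧ v ∈ s)
    {s : Set V} (hs : IsRemovable G s) (v : V) :
    ∃ s', IsRemovable G s' ∧ s ⊆ s' ∧ v ∈ s' := by
  by_cases hv : v ∈ s
  · exact ⟨s, hs, subset_rfl, hv⟩
  · obtain ⟨φ⟩ := hs.2.2
    obtain ⟨t, ht, hut⟩ := hcov (φ.symm ⟨v, hv⟩)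
    refine ⟨s ∪ (fun x => ((φ x : V))) '' t,
      aux_removable_union hs.1 ht.2.1 ht.2.2 φ, Set.subset_union_left,
      Or.inr ⟨(φ.symm ⟨v, hv⟩ : V), hut, ?_⟩⟩
    show ((φ (φ.symm ⟨v, hv⟩) : V)) = v
    rw [RelIso.apply_symm_apply]

/-- Removable sets can be extended to cover any finite set of vertices. -/
lemma aux_ext_finset {V : Type*} {G : SimpleGraph V}
    (hcov : ∀ v, ∃ s, IsRemovable G s ∧ v ∈ s)
    {s : Set V} (hs : IsRemovable G s) (F : Finset V) :
    ∃ s', IsRemovable G s' ∧ s ⊆ s' ∧ ↑F ⊆ s' := by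
  classical
  induction F using Finset.induction_on with
  | empty => exact ⟨s, hs, subset_rfl, by simp⟩
  | @insert v F hvF ih =>
    obtain ⟨s', h1, h2, h3⟩ := ih
    obtain ⟨s'', k1, k2, k3⟩ := aux_ext_one hcov h1 v
    refine ⟨s'', k1, h2.trans k2, ?_⟩
    rw [Finset.coe_insert, Set.insert_subset_iff]
    exact ⟨k3, h3.trans k2⟩

/-- In a connected graph, the complement of a removable set is connected, so any
two vertices outside `s` are joined by a walk avoiding `s`. -/
lemma aux_exists_avoiding_walk {V : Type*} {G : SimpleGraph V} (hc : G.Connected)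
    {s : Set V} (hs : IsRemovable G s) {a b : V} (ha : a ∉ s) (hb : b ∉ s) :
    ∃ W : G.Walk a b, ∀ v ∈ W.support, v ∉ s := by
  have hconn : (G.induce sᶜ).Connected := by
    obtain ⟨φ⟩ := hs.2.2
    exact φ.connected_iff.mp hc
  obtain ⟨w⟩ := hconn.preconnected ⟨a, ha⟩ ⟨b, hb⟩
  refine ⟨(w.map (SimpleGraph.Embedding.induce sᶜ).toHom).copy rfl rfl, ?_⟩
  intro x hx
  change x ∈ (w.map (SimpleGraph.Embedding.induce sᶜ).toHom).support at hx
  rw [SimpleGraph.Walk.support_map] at hx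
  obtain ⟨y, _, rfl⟩ := List.mem_map.mp hx
  exact y.2

/-- State of the recursive construction of the escaping walk. -/
structure RayState {V : Type*} (G : SimpleGraph V) where
  s : Set V
  rem : IsRemovable G s
  q : V
  hq : q ∉ s
  p : V
  W : G.Walk p q

/-- One step of the construction. -/
def RayRel {V : Type*} (G : SimpleGraph V) (c d : RayState G) : Prop :=
  c.s ⊆ d.s ∧ c.q ∈ d.s ∧ (∀ v ∈ c.W.support, v ∈ d.s) ∧ d.p = c.q ∧
    ∀ v ∈ d.W.support, v ∉ c.s

lemma aux_rayRel_exists {V : Type*} {G : SimpleGraph V} (hc : G.Connected)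
    (hcov : ∀ v, ∃ s, IsRemovable G s ∧ v ∈ s) (c : RayState G) :
    ∃ d, RayRel G c d := by
  classical
  obtain ⟨s', h1, h2, h3⟩ := aux_ext_finset hcov c.rem (insert c.q c.W.support.toFinset)
  obtain ⟨q', hq'⟩ := Set.nonempty_compl.mpr h1.2.1
  have hcq : c.q ∈ s' := h3 (by simp)
  have hsup : ∀ v ∈ c.W.support, v ∈ s' := by
    intro v hv
    exact h3 (by simp [hv])
  have hq's : q' ∉ c.s := fun h => hq' (h2 h)
  obtain ⟨W, hW⟩ := aux_exists_avoiding_walk hc c.rem c.hq hq's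
  exact ⟨⟨s', h1, q', hq', c.q, W⟩, h2, hcq, hsup, rfl, hW⟩

/-- Flattening of a sequence of segments with lengths `len` into a single index. -/
def auxFlatten (len : ℕ → ℕ) : ℕ → ℕ × ℕ
  | 0 => (0, 0)
  | t + 1 =>
    let q := auxFlatten len t
    if q.2 + 1 < len q.1 then (q.1, q.2 + 1) else (q.1 + 1, 0)

lemma auxFlatten_succ (len : ℕ → ℕ) (t : ℕ) :
    auxFlatten len (t + 1) =
      if (auxFlatten len t).2 + 1 < len (auxFlatten len t).1 then
        ((auxFlatten len t).1, (auxFlatten len t).2 + 1)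
      else ((auxFlatten len t).1 + 1, 0) := rfl

lemma auxFlatten_snd_lt (len : ℕ → ℕ) (hlen : ∀ n, 0 < len n) (t : ℕ) :
    (auxFlatten len t).2 < len (auxFlatten len t).1 := by
  induction t with
  | zero => exact hlen 0
  | succ t ih =>
    rw [auxFlatten_succ]
    split_ifs with h
    · exact h
    · exact hlen _

lemma auxFlatten_sum (len : ℕ → ℕ) (hlen : ∀ n, 0 < len n) (t : ℕ) :
    (∑ k ∈ Finset.range (auxFlatten len t).1, len k) + (auxFlatten len t).2 = t := by
  induction t with
  | zero => simp [auxFlatten]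
  | succ t ih =>
    rw [auxFlatten_succ]
    split_ifs with h
    · simpa using by omega
    · have hlt := auxFlatten_snd_lt len hlen t
      have heq : (auxFlatten len t).2 + 1 = len (auxFlatten len t).1 := by omega
      simp only [Finset.sum_range_succ]
      omega

lemma auxFlatten_inj (len : ℕ → ℕ) (hlen : ∀ n, 0 < len n) :
    Function.Injective (auxFlatten len) := by
  intro a b h
  have ha := auxFlatten_sum len hlen a
  have hb := auxFlatten_sum len hlen b
  rw [h] at ha
  omega

/-- From an infinite walk visiting each vertex finitely often, extract a ray. -/
lemma aux_ray_of_walk {V : Type*} {G : SimpleGraph V} (w : ℕ → V)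
    (hadj : ∀ t, G.Adj (w t) (w (t + 1)))
    (hfin : ∀ v, {t | w t = v}.Finite) :
    ∃ f : ℕ → V, Function.Injective f ∧ ∀ n, G.Adj (f n) (f (n + 1)) := by
  classical
  have hmemt : ∀ t, t ∈ (hfin (w t)).toFinset := fun t => (hfin (w t)).mem_toFinset.mpr rfl
  let F : ℕ → ℕ := fun t => ((hfin (w t)).toFinset).max' ⟨t, hmemt t⟩
  have hFmem : ∀ t, w (F t) = w t := fun t =>
    (hfin (w t)).mem_toFinset.mp (Finset.max'_mem _ _)
  have hFle : ∀ t, t ≤ F t := fun t => Finset.le_max' _ t (hmemt t)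
  have hFub : ∀ t t', w t' = w t → t' ≤ F t := fun t t' h =>
    Finset.le_max' _ t' ((hfin (w t)).mem_toFinset.mpr h)
  let a : ℕ → ℕ := fun k => Nat.rec 0 (fun _ ak => F ak + 1) k
  have ha_succ : ∀ k, a (k + 1) = F (a k) + 1 := fun k => rfl
  have hamono : StrictMono a := strictMono_nat_of_lt_succ (fun k => by
    rw [ha_succ]
    exact Nat.lt_succ_of_le (hFle (a k)))
  have key : ∀ j k, j < k → w (a j) ≠ w (a k) := by
    intro j k hjk he
    have h1 : a k ≤ F (a j) := hFub (a j) (a k) he.symm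
    have h2 : F (a j) + 1 ≤ a k := by
      rw [← ha_succ j]
      exact hamono.monotone (Nat.succ_le_of_lt hjk)
    omega
  refine ⟨w ∘ a, ?_, ?_⟩
  · intro j k h
    by_contra hne
    rcases Ne.lt_or_gt hne with h' | h'
    · exact key j k h' h
    · exact key k j h' h.symm
  · intro n
    have h := hadj (F (a n))
    rw [hFmem (a n)] at h
    show G.Adj (w (a n)) (w (a (n + 1)))
    rw [ha_succ]
    exact h

/-- Main construction: if `G` is connected, has a removable set, and every vertex
lies in a removable set, then `G` contains a ray. -/
lemma aux_exists_ray {V : Type*} {G : SimpleGraph V} (hc : G.Connected)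
    (hcov : ∀ v, ∃ s, IsRemovable G s ∧ v ∈ s)
    {s₀ : Set V} (hs0 : IsRemovable G s₀) :
    ∃ f : ℕ → V, Function.Injective f ∧ ∀ n, G.Adj (f n) (f (n + 1)) := by
  classical
  choose step hstep using aux_rayRel_exists hc hcov
  obtain ⟨q0, hq0⟩ := Set.nonempty_compl.mpr hs0.2.1
  let S : ℕ → RayState G := fun n => step^[n] ⟨s₀, hs0, q0, hq0, q0, SimpleGraph.Walk.nil⟩
  have hS : ∀ n, RayRel G (S n) (S (n + 1)) := by
    intro n
    have h : S (n + 1) = step (S n) := Function.iterate_succ_apply' step n _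
    rw [h]
    exact hstep (S n)
  have hmono : ∀ {n m : ℕ}, n ≤ m → (S n).s ⊆ (S m).s := by
    intro n m h
    induction h with
    | refl => exact subset_rfl
    | step h ih => exact ih.trans (hS _).1
  have hPstart : ∀ n, (S (n + 1)).p = (S n).q := fun n => (hS n).2.2.2.1
  have hPavoid : ∀ n, ∀ v ∈ (S (n + 1)).W.support, v ∉ (S n).s := fun n => (hS n).2.2.2.2
  have hPswallow : ∀ n, ∀ v ∈ (S (n + 1)).W.support, v ∈ (S (n + 2)).s :=
    fun n => (hS (n + 1)).2.2.1
  have hqin : ∀ n, (S n).q ∈ (S (n + 1)).s := fun n => (hS n).2.1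
  set len : ℕ → ℕ := fun n => (S (n + 1)).W.length with hlendef
  have hlen : ∀ n, 0 < len n := by
    intro n
    by_contra hcon
    push_neg at hcon
    have h0 : (S (n + 1)).W.length = 0 := Nat.le_zero.mp hcon
    have heq := SimpleGraph.Walk.eq_of_length_eq_zero h0
    have h1 : (S n).q ∈ (S (n + 1)).s := hqin n
    rw [← hPstart n, heq] at h1
    exact (S (n + 1)).hq h1
  set g : ℕ → ℕ × ℕ := auxFlatten len with hgdef
  set w : ℕ → V := fun t => (S ((g t).1 + 1)).W.getVert (g t).2 with hwdef
  have hginv : ∀ t, (g t).2 < len (g t).1 := auxFlatten_snd_lt len hlen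
  have hadj : ∀ t, G.Adj (w t) (w (t + 1)) := by
    intro t
    have hstep_eq : g (t + 1) =
        if (g t).2 + 1 < len (g t).1 then ((g t).1, (g t).2 + 1)
        else ((g t).1 + 1, 0) := auxFlatten_succ len t
    show G.Adj ((S ((g t).1 + 1)).W.getVert (g t).2)
      ((S ((g (t + 1)).1 + 1)).W.getVert (g (t + 1)).2)
    by_cases h : (g t).2 + 1 < len (g t).1
    · rw [hstep_eq, if_pos h]
      exact SimpleGraph.Walk.adj_getVert_succ _ (hginv t)
    · rw [hstep_eq, if_neg h]
      have hi : (g t).2 + 1 = len (g t).1 := by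
        have := hginv t
        omega
      have h2 : (S ((g t).1 + 1 + 1)).W.getVert 0 = (S ((g t).1 + 1)).q := by
        rw [SimpleGraph.Walk.getVert_zero]
        exact hPstart ((g t).1 + 1)
      have h1 : (S ((g t).1 + 1)).W.getVert ((g t).2 + 1) = (S ((g t).1 + 1)).q := by
        have : (g t).2 + 1 = (S ((g t).1 + 1)).W.length := hi
        rw [this]
        exact SimpleGraph.Walk.getVert_length _
      rw [h2]
      have hh := SimpleGraph.Walk.adj_getVert_succ ((S ((g t).1 + 1)).W) (hginv t)
      rw [h1] at hh
      exact hh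
  have hwsup : ∀ t, w t ∈ (S ((g t).1 + 1)).W.support := fun t =>
    aux_getVert_mem_support _ _
  have hfin : ∀ v, {t | w t = v}.Finite := by
    intro v
    rcases Set.eq_empty_or_nonempty {t | w t = v} with he | ⟨t0, ht0⟩
    · rw [he]
      exact Set.finite_empty
    · have ht0' : w t0 = v := ht0
      have hex : ∃ n, v ∈ (S (n + 1)).W.support := ⟨(g t0).1, ht0' ▸ hwsup t0⟩
      have hn0 : v ∈ (S (Nat.find hex + 1)).W.support := Nat.find_spec hex
      have hbound : ∀ n, v ∈ (S (n + 1)).W.support → n ≤ Nat.find hex + 1 := by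
        intro n hn
        by_contra hcon
        push_neg at hcon
        have h1 : v ∈ (S (Nat.find hex + 2)).s := hPswallow _ v hn0
        have h2 : v ∉ (S n).s := hPavoid n v hn
        exact h2 (hmono (by omega) h1)
      have hsub : {t | w t = v} ⊆ g ⁻¹'
          (Set.Iic (Nat.find hex + 1) ×ˢ
            Set.Iic (max (len (Nat.find hex)) (len (Nat.find hex + 1)))) := by
        intro t ht
        have ht' : w t = v := ht
        have h1 : v ∈ (S ((g t).1 + 1)).W.support := ht' ▸ hwsup t
        have h2 : (g t).1 ≤ Nat.find hex + 1 := hbound _ h1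
        have h3 : Nat.find hex ≤ (g t).1 := Nat.find_min' hex h1
        have h4 := hginv t
        have h5 : (g t).1 = Nat.find hex ∨ (g t).1 = Nat.find hex + 1 := by omega
        simp only [Set.mem_preimage, Set.mem_prod, Set.mem_Iic]
        refine ⟨h2, ?_⟩
        rcases h5 with h5 | h5 <;> rw [h5] at h4
        · exact le_trans (Nat.le_of_lt_succ (Nat.lt_succ_of_lt h4)) (le_max_left _ _)
        · exact le_trans (Nat.le_of_lt_succ (Nat.lt_succ_of_lt h4)) (le_max_right _ _)
      exact Set.Finite.subset
        (Set.Finite.preimage ((auxFlatten_inj len hlen).injOn)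
          ((Set.finite_Iic _).prod (Set.finite_Iic _))) hsub
  exact aux_ray_of_walk w hadj hfin

theorem stmt6 {V : Type*} (G : SimpleGraph V) (hG : SelfContained G)
    (hc : G.Connected)
    (hray : ¬∃ f : ℕ → V, Function.Injective f ∧ ∀ n, G.Adj (f n) (f (n + 1))) :
    (FndSet G).Nonempty := by
  by_contra hfnd
  have hcov : ∀ v, ∃ s, IsRemovable G s ∧ v ∈ s := by
    intro v
    by_contra hv
    push_neg at hv
    exact hfnd ⟨v, fun s hs hvs => hv s hs hvs⟩
  obtain ⟨t, htu, ⟨φt⟩⟩ := hG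
  have hV : Nonempty V := hc.nonempty
  have htne : t.Nonempty := by
    obtain ⟨v⟩ := hV
    exact ⟨(φt v : V), (φt v).2⟩
  have hs0 : IsRemovable G tᶜ := by
    refine ⟨Set.nonempty_compl.mpr htu, ?_, ?_⟩
    · intro h
      obtain ⟨x, hx⟩ := htne
      have hx' : x ∈ tᶜ := h ▸ Set.mem_univ x
      exact hx' hx
    · rw [compl_compl]
      exact ⟨φt⟩
  exact hray (aux_exists_ray hc hcov hs0)
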